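/- Let (X, ‖·‖) be a complex normed space with X ≠ {0}, and define its Deformation D(X, ‖·‖) := sup{ |⟨a|b⟩| : a, b ∈ X, ‖a‖ = 1 = ‖b‖ }. Then 1 ≤ D(X, ‖·‖) ≤ √2. -/

import Mathlib

noncomputable def cprod {X : Type*} [NormedAddCommGroup X] [NormedSpace ℂ X] (x y : X) : ℂ :=
  open scoped Classical in
  if x = 0 ∨ y = 0 then 0
  else
    ((‖x‖ * ‖y‖ : ℝ) : ℂ) * (1 / 4 : ℂ) *
      (((‖((‖x‖⁻¹ : ℝ) : ℂ) • x + ((‖y‖⁻¹ : ℝ) : ℂ) • y‖ ^ 2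
          - ‖((‖x‖⁻¹ : ℝ) : ℂ) • x - ((‖y‖⁻¹ : ℝ) : ℂ) • y‖ ^ 2 : ℝ) : ℂ)
        + Complex.I *
          ((‖((‖x‖⁻¹ : ℝ) : ℂ) • x + Complex.I • (((‖y‖⁻¹ : ℝ) : ℂ) • y)‖ ^ 2
            - ‖((‖x‖⁻¹ : ℝ) : ℂ) • x - Complex.I • (((‖y‖⁻¹ : ℝ) : ℂ) • y)‖ ^ 2 : ℝ) : ℂ))

lemma cprod_unit {X : Type*} [NormedAddCommGroup X] [NormedSpace ℂ X] (a b : X)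
    (ha : ‖a‖ = 1) (hb : ‖b‖ = 1) :
    cprod a b = (1/4 : ℂ) *
      (((‖a + b‖ ^ 2 - ‖a - b‖ ^ 2 : ℝ) : ℂ)
        + Complex.I * ((‖a + Complex.I • b‖ ^ 2 - ‖a - Complex.I • b‖ ^ 2 : ℝ) : ℂ)) := by
  have ha0 : a ≠ 0 := by intro h; simp [h] at ha
  have hb0 : b ≠ 0 := by intro h; simp [h] at hb
  simp [cprod, ha0, hb0, ha, hb]

lemma abs_cprod_le {X : Type*} [NormedAddCommGroup X] [NormedSpace ℂ X] (a b : X)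
    (ha : ‖a‖ = 1) (hb : ‖b‖ = 1) :
    ‖cprod a b‖ ≤ Real.sqrt 2 := by
  rw [cprod_unit a b ha hb]
  set r := (‖a + b‖ ^ 2 - ‖a - b‖ ^ 2 : ℝ) with hrdef
  set s := (‖a + Complex.I • b‖ ^ 2 - ‖a - Complex.I • b‖ ^ 2 : ℝ) with hsdef
  have hr : |r| ≤ 4 := by
    have h1 : ‖a + b‖ ≤ 2 := by have := norm_add_le a b; linarith
    have h2 : ‖a - b‖ ≤ 2 := by have := norm_sub_le a b; linarith
    have h1' : (0:ℝ) ≤ ‖a + b‖ := norm_nonneg _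
    have h2' : (0:ℝ) ≤ ‖a - b‖ := norm_nonneg _
    rw [hrdef, abs_le]; constructor <;> nlinarith
  have hs : |s| ≤ 4 := by
    have h1 : ‖a + Complex.I • b‖ ≤ 2 := by
      have := norm_add_le a (Complex.I • b)
      rw [norm_smul] at this; simp [hb] at this; linarith
    have h2 : ‖a - Complex.I • b‖ ≤ 2 := by
      have := norm_sub_le a (Complex.I • b)
      rw [norm_smul] at this; simp [hb] at this; linarith
    have h1' : (0:ℝ) ≤ ‖a + Complex.I • b‖ := norm_nonneg _
    have h2' : (0:ℝ) ≤ ‖a - Complex.I • b‖ := norm_nonneg _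
    rw [hsdef, abs_le]; constructor <;> nlinarith
  have habs : ‖(r:ℂ) + Complex.I * (s:ℂ)‖ = Real.sqrt (r^2 + s^2) := by
    rw [mul_comm Complex.I]
    exact Complex.norm_add_mul_I r s
  rw [norm_mul, habs]
  have h14 : ‖(1/4 : ℂ)‖ = 1/4 := by norm_num
  rw [h14]
  have h32 : Real.sqrt (r^2 + s^2) ≤ Real.sqrt 32 := by
    apply Real.sqrt_le_sqrt
    have := abs_le.mp hr; have := abs_le.mp hs
    nlinarith
  have h32' : Real.sqrt 32 = 4 * Real.sqrt 2 := by
    rw [show (32:ℝ) = 4^2 * 2 by norm_num, Real.sqrt_mul (by positivity), Real.sqrt_sq (by norm_num)]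
  nlinarith [Real.sqrt_nonneg (2:ℝ)]

theorem stmt8 {X : Type*} [NormedAddCommGroup X] [NormedSpace ℂ X] [Nontrivial X] :
    1 ≤ sSup {t : ℝ | ∃ a b : X, ‖a‖ = 1 ∧ ‖b‖ = 1 ∧ t = ‖cprod a b‖} ∧
    sSup {t : ℝ | ∃ a b : X, ‖a‖ = 1 ∧ ‖b‖ = 1 ∧ t = ‖cprod a b‖} ≤ Real.sqrt 2 := by
  set S := {t : ℝ | ∃ a b : X, ‖a‖ = 1 ∧ ‖b‖ = 1 ∧ t = ‖cprod a b‖} with hS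
  obtain ⟨a, ha⟩ : ∃ a : X, ‖a‖ = 1 := by
    obtain ⟨x, hx⟩ := exists_ne (0 : X)
    have hxn : ‖x‖ ≠ 0 := norm_ne_zero_iff.mpr hx
    refine ⟨((‖x‖⁻¹ : ℝ) : ℂ) • x, ?_⟩
    rw [norm_smul]
    simp [abs_of_nonneg (inv_nonneg.mpr (norm_nonneg x)), inv_mul_cancel₀ hxn]
  have hmem : (1:ℝ) ∈ S := by
    refine ⟨a, a, ha, ha, ?_⟩
    rw [cprod_unit a a ha ha]
    have h1 : ‖a + a‖ = 2 := by
      rw [show a + a = (2:ℂ) • a from (two_smul ℂ a).symm, norm_smul, ha]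
      simp
    have h2 : ‖a + Complex.I • a‖ = ‖a - Complex.I • a‖ := by
      have e1 : a + Complex.I • a = (1 + Complex.I) • a := by rw [add_smul, one_smul]
      have e2 : a - Complex.I • a = (1 - Complex.I) • a := by rw [sub_smul, one_smul]
      have n1 : ‖(1 + Complex.I)‖ = Real.sqrt 2 := by
        rw [Complex.norm_def]; norm_num [Complex.normSq_apply]
      have n2 : ‖(1 - Complex.I)‖ = Real.sqrt 2 := by
        rw [Complex.norm_def]; norm_num [Complex.normSq_apply]
      rw [e1, e2, norm_smul, norm_smul, n1, n2]
    rw [h1, h2]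
    norm_num
  have hbdd : ∀ t ∈ S, t ≤ Real.sqrt 2 := by
    rintro t ⟨a, b, ha', hb', rfl⟩
    exact abs_cprod_le a b ha' hb'
  have hne : S.Nonempty := ⟨1, hmem⟩
  have hB : BddAbove S := ⟨Real.sqrt 2, hbdd⟩
  exact ⟨le_csSup hB hmem, csSup_le hne hbdd⟩
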